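/- Let m ≥ 1, let R > 0, and let s ≥ 0 be an integer. There is a constant C = C(s, R) > 0 such that for all t ≥ 0, all b ∈ ℝ, all unit vectors V₁, …, V_s ∈ ℍ^m, and all (X,Z) ∈ ℍ^m × Im(ℍ) with ‖X‖ ≤ R and |Z| ≤ R: |(E_{V₁} E_{V₂} ⋯ E_{V_s} f_{t,b})(X,Z)| ≤ C · B_t(X,Z)^{−s/4} · (1 + |b|)^s, where B_t(X,Z) = (e^{−2t} + ‖X‖²/4)² + |Z|² and f_{t,b} : ℍ^m × Im(ℍ) → ℂ is the complex-valued function f_{t,b}(X,Z) = B_t(X,Z)^{ib} := exp(i·b·log B_t(X,Z)). -/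

import Mathlib

open Quaternion

noncomputable section

/-- The imaginary part `Im(q) = (q - q*)/2` of a quaternion. -/
def qIm (q : Quaternion ℝ) : Quaternion ℝ := (q - star q) / 2

/-- The left-invariant vector field `E_V` of the 2-step nilpotent group
`N̄ = ℍ^m × Im(ℍ)`, acting on (`F`-valued) functions on `ℍ^m × ℍ` by
`(E_V f)(X,Z) = Df(X,Z)[(V, Im(X*V)/2)]` (Fréchet derivative). -/
def EV {F : Type*} [NormedAddCommGroup F] [NormedSpace ℝ F] (m : ℕ)
    (V : Fin m → Quaternion ℝ)
    (f : (Fin m → Quaternion ℝ) × Quaternion ℝ → F) :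
    (Fin m → Quaternion ℝ) × Quaternion ℝ → F :=
  fun p => fderiv ℝ f p (V, qIm (∑ j, star (p.1 j) * V j) / 2)

/-- Iterated left-invariant derivative `E_{V₁} E_{V₂} ⋯ E_{V_s} f`. -/
def EIter {F : Type*} [NormedAddCommGroup F] [NormedSpace ℝ F] (m : ℕ) :
    List (Fin m → Quaternion ℝ) →
      ((Fin m → Quaternion ℝ) × Quaternion ℝ → F) →
      ((Fin m → Quaternion ℝ) × Quaternion ℝ → F)
  | [], f => f
  | V :: Vs, f => EV m V (EIter m Vs f)

/-- `B_t(X,Z) = (e^{-2t} + ‖X‖²/4)² + |Z|²` as a function on `ℍ^m × ℍ`,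
where `‖X‖² = ∑ⱼ |Xⱼ|²`. -/
def BtF (m : ℕ) (t : ℝ) : (Fin m → Quaternion ℝ) × Quaternion ℝ → ℝ :=
  fun p => (Real.exp (-2 * t) + (∑ j, Quaternion.normSq (p.1 j)) / 4) ^ 2
    + Quaternion.normSq p.2

/-- The complex-valued function `f_{t,b} = B_t^{ib} = exp(i·b·log B_t)`. -/
def ftb (m : ℕ) (t b : ℝ) : (Fin m → Quaternion ℝ) × Quaternion ℝ → ℂ :=
  fun p => Complex.exp (Complex.I * b * Real.log (BtF m t p))

/-! ### Auxiliary development -/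

abbrev P (m : ℕ) := (Fin m → Quaternion ℝ) × Quaternion ℝ

lemma norm_two_q : ‖(2:Quaternion ℝ)‖ = 2 := by
  rw [show (2:Quaternion ℝ) = ((2:ℝ):Quaternion ℝ) by norm_cast, Quaternion.norm_coe]
  norm_num

lemma qIm_smul (c : ℝ) (q : Quaternion ℝ) : qIm (c • q) = c • qIm q := by
  simp only [qIm, Quaternion.star_smul, ← smul_sub, smul_div_assoc]

lemma qIm_add (q r : Quaternion ℝ) : qIm (q + r) = qIm q + qIm r := by
  simp only [qIm, star_add, ← add_div]; congr 1; abel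

lemma norm_qIm_le (q : Quaternion ℝ) : ‖qIm q‖ ≤ ‖q‖ := by
  calc ‖(q - star q)/2‖ = ‖q - star q‖ / 2 := by rw [norm_div, norm_two_q]
    _ ≤ (‖q‖ + ‖star q‖) / 2 := by gcongr; exact norm_sub_le _ _
    _ = ‖q‖ := by rw [Quaternion.norm_star]; ring

lemma abs_re_le_norm (q : Quaternion ℝ) : |q.re| ≤ ‖q‖ := by
  have h1 : Quaternion.normSq q = ‖q‖ * ‖q‖ := Quaternion.normSq_eq_norm_mul_self q
  have h2 : Quaternion.normSq q = q.re^2 + q.imI^2 + q.imJ^2 + q.imK^2 := Quaternion.normSq_def' q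
  nlinarith [norm_nonneg q, abs_nonneg q.re, sq_abs q.re, sq_nonneg q.imI, sq_nonneg q.imJ,
    sq_nonneg q.imK]

/-- `q ↦ qIm (star q * c) / 2` as a continuous linear map. -/
noncomputable def Lq (c : Quaternion ℝ) : Quaternion ℝ →L[ℝ] Quaternion ℝ :=
  LinearMap.mkContinuous
    { toFun := fun q => qIm (star q * c) / 2
      map_add' := fun q r => by
        show qIm (star (q + r) * c) / 2 = _
        rw [star_add, add_mul, qIm_add, add_div]
      map_smul' := fun s q => by
        show qIm (star (s • q) * c) / 2 = _
        rw [Quaternion.star_smul, smul_mul_assoc, qIm_smul, smul_div_assoc]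
        rfl }
    ‖c‖ (fun q => by
      simp only [LinearMap.coe_mk, AddHom.coe_mk]
      calc ‖qIm (star q * c) / 2‖ = ‖qIm (star q * c)‖/2 := by rw [norm_div, norm_two_q]
        _ ≤ ‖star q * c‖ / 2 := by gcongr; exact norm_qIm_le _
        _ ≤ ‖c‖ * ‖q‖ := by
            rw [norm_mul, Quaternion.norm_star]
            nlinarith [norm_nonneg q, norm_nonneg c])

lemma Lq_apply (c q : Quaternion ℝ) : Lq c q = qIm (star q * c) / 2 := rfl

lemma norm_Lq_le (c : Quaternion ℝ) : ‖Lq c‖ ≤ ‖c‖ :=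
  LinearMap.mkContinuous_norm_le _ (norm_nonneg c) _

instance qNS : @NormedSpace ℝ (Quaternion ℝ) _ NonUnitalSeminormedRing.toSeminormedAddCommGroup :=
  inferInstance

/-- real bilinear form `(q, r) ↦ (q * star r).re` on quaternions. -/
noncomputable def bilQ : Quaternion ℝ →L[ℝ] Quaternion ℝ →L[ℝ] ℝ :=
  LinearMap.mkContinuous₂
    (LinearMap.mk₂ ℝ (fun q r => (q * star r).re)
      (fun q q' r => by simp [add_mul])
      (fun s q r => by simp [smul_mul_assoc])
      (fun q r r' => by simp [star_add, mul_add])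
      (fun s q r => by simp [Quaternion.star_smul, mul_smul_comm]))
    1 (fun q r => by
      simp only [LinearMap.mk₂_apply, one_mul]
      calc |(q * star r).re| ≤ ‖q * star r‖ := abs_re_le_norm _
        _ = ‖q‖ * ‖r‖ := by rw [norm_mul, Quaternion.norm_star])

lemma bilQ_apply (q r : Quaternion ℝ) : bilQ q r = (q * star r).re := rfl

lemma norm_bilQ_le : ‖bilQ‖ ≤ 1 := LinearMap.mkContinuous₂_norm_le _ zero_le_one _

lemma bilQ_self (q : Quaternion ℝ) : bilQ q q = Quaternion.normSq q := by
  rw [bilQ_apply, Quaternion.normSq_def]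

noncomputable def qImHom : Quaternion ℝ →+ Quaternion ℝ := AddMonoidHom.mk' qIm qIm_add

noncomputable def wCLM (m : ℕ) (V : Fin m → Quaternion ℝ) : P m →L[ℝ] Quaternion ℝ :=
  ∑ j, (Lq (V j)).comp ((ContinuousLinearMap.proj j).comp (ContinuousLinearMap.fst ℝ _ _))

lemma wCLM_apply (m : ℕ) (V : Fin m → Quaternion ℝ) (p : P m) :
    wCLM m V p = qIm (∑ j, star (p.1 j) * V j) / 2 := by
  have h : qIm (∑ j, star (p.1 j) * V j) = ∑ j, qIm (star (p.1 j) * V j) :=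
    map_sum qImHom _ _
  rw [h, Finset.sum_div]
  simp [wCLM, ContinuousLinearMap.sum_apply, Lq_apply]

lemma EV_eq_clm {F : Type*} [NormedAddCommGroup F] [NormedSpace ℝ F] (m : ℕ)
    (V : Fin m → Quaternion ℝ) (f : P m → F) :
    EV m V f = fun p => fderiv ℝ f p (V, wCLM m V p) := by
  funext p; rw [EV, wCLM_apply]

lemma contDiff_EV {F : Type*} [NormedAddCommGroup F] [NormedSpace ℝ F] (m : ℕ)
    (V : Fin m → Quaternion ℝ) {f : P m → F} (hf : ContDiff ℝ (⊤:ℕ∞) f) :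
    ContDiff ℝ (⊤:ℕ∞) (EV m V f) := by
  rw [EV_eq_clm]
  exact (hf.fderiv_right (le_refl _)).clm_apply (contDiff_const.prodMk (wCLM m V).contDiff)
section EVrules
variable {m : ℕ} {E F G : Type*} [NormedAddCommGroup E] [NormedSpace ℝ E]
  [NormedAddCommGroup F] [NormedSpace ℝ F] [NormedAddCommGroup G] [NormedSpace ℝ G]
  {V : Fin m → Quaternion ℝ} {f : P m → F} {g : P m → G}

lemma EV_add {g : P m → F} (V : Fin m → Quaternion ℝ) (hf : Differentiable ℝ f) (hg : Differentiable ℝ g) :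
    EV m V (fun p => f p + g p) = fun p => EV m V f p + EV m V g p := by
  funext p; simp only [EV, fderiv_fun_add (hf p) (hg p), ContinuousLinearMap.add_apply]

lemma EV_neg (V : Fin m → Quaternion ℝ) (f : P m → F) :
    EV m V (fun p => -f p) = fun p => -EV m V f p := by
  funext p; simp only [EV, fderiv_fun_neg, ContinuousLinearMap.neg_apply]

lemma EV_const (V : Fin m → Quaternion ℝ) (c : F) :
    EV m V (fun _ : P m => c) = fun _ => (0:F) := by
  funext p; simp [EV]

lemma EV_smul (V : Fin m → Quaternion ℝ) (c : ℝ) (hf : Differentiable ℝ f) :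
    EV m V (fun p => c • f p) = fun p => c • EV m V f p := by
  funext p; simp only [EV, fderiv_fun_const_smul (hf p), ContinuousLinearMap.smul_apply]

lemma EV_clm (V : Fin m → Quaternion ℝ) (L : F →L[ℝ] G) (hf : Differentiable ℝ f) :
    EV m V (fun p => L (f p)) = fun p => L (EV m V f p) := by
  funext p
  have h : HasFDerivAt (fun q => L (f q)) (L.comp (fderiv ℝ f p)) p :=
    L.hasFDerivAt.comp p (hf p).hasFDerivAt
  simp only [EV]; rw [h.fderiv]; rfl

lemma EV_bilin (V : Fin m → Quaternion ℝ) (bl : E →L[ℝ] F →L[ℝ] G) {f : P m → E}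
    {g : P m → F} (hf : Differentiable ℝ f) (hg : Differentiable ℝ g) :
    EV m V (fun p => bl (f p) (g p))
      = fun p => bl (EV m V f p) (g p) + bl (f p) (EV m V g p) := by
  funext p
  have hc : HasFDerivAt (fun q => bl (f q)) (bl.comp (fderiv ℝ f p)) p :=
    bl.hasFDerivAt.comp p (hf p).hasFDerivAt
  have h := hc.clm_apply (hg p).hasFDerivAt
  simp only [EV]; rw [h.fderiv]
  simp only [ContinuousLinearMap.add_apply, ContinuousLinearMap.comp_apply,
    ContinuousLinearMap.coe_comp', Function.comp_apply, ContinuousLinearMap.flip_apply]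
  rw [add_comm]

lemma EV_proj (V : Fin m → Quaternion ℝ) (j : Fin m) :
    EV m V (fun p : P m => p.1 j) = fun _ => V j := by
  funext p
  simp only [EV]
  rw [show (fun p : P m => p.1 j)
      = ⇑((ContinuousLinearMap.proj j).comp
          (ContinuousLinearMap.fst ℝ (Fin m → Quaternion ℝ) (Quaternion ℝ))) from rfl,
    ContinuousLinearMap.fderiv]
  rfl

lemma EV_snd (V : Fin m → Quaternion ℝ) :
    EV m V (fun p : P m => p.2) = fun p => qIm (∑ j, star (p.1 j) * V j) / 2 := by
  funext p
  simp only [EV]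
  rw [show (fun p : P m => p.2)
      = ⇑(ContinuousLinearMap.snd ℝ (Fin m → Quaternion ℝ) (Quaternion ℝ)) from rfl,
    ContinuousLinearMap.fderiv]
  rfl

lemma EV_inv (V : Fin m → Quaternion ℝ) (f : P m → ℝ) (hf : Differentiable ℝ f)
    (hne : ∀ p, f p ≠ 0) :
    EV m V (fun p => (f p)⁻¹) = fun p => -(((f p)^2)⁻¹ * EV m V f p) := by
  funext p
  have h : HasFDerivAt (fun q => (f q)⁻¹) ((-((f p)^2)⁻¹) • fderiv ℝ f p) p :=
    (hasDerivAt_inv (hne p)).comp_hasFDerivAt p (hf p).hasFDerivAt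
  simp only [EV]; rw [h.fderiv]
  simp [smul_eq_mul]

lemma EV_exp_log (V : Fin m → Quaternion ℝ) (c : ℂ) (f : P m → ℝ) (hf : Differentiable ℝ f)
    (hpos : ∀ p, 0 < f p) :
    EV m V (fun p => Complex.exp (c * ↑(Real.log (f p))))
      = fun p => Complex.exp (c * ↑(Real.log (f p))) * (c * ((f p)⁻¹ * ↑(EV m V f p))) := by
  funext p
  have hlog : HasFDerivAt (fun q => Real.log (f q)) ((f p)⁻¹ • fderiv ℝ f p) p :=
    (Real.hasDerivAt_log (hpos p).ne').comp_hasFDerivAt p (hf p).hasFDerivAt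
  have hR : HasFDerivAt (fun q => (↑(Real.log (f q)) : ℂ))
      (Complex.ofRealCLM.comp ((f p)⁻¹ • fderiv ℝ f p)) p :=
    Complex.ofRealCLM.hasFDerivAt.comp p hlog
  have hM : HasFDerivAt (fun q => c * (↑(Real.log (f q)) : ℂ))
      (c • (Complex.ofRealCLM.comp ((f p)⁻¹ • fderiv ℝ f p))) p := hR.const_mul c
  have h : HasFDerivAt (fun q => Complex.exp (c * ↑(Real.log (f q))))
      ((Complex.exp (c * ↑(Real.log (f p)))) •
        (c • (Complex.ofRealCLM.comp ((f p)⁻¹ • fderiv ℝ f p)))) p :=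
    (Complex.hasDerivAt_exp _).comp_hasFDerivAt p hM
  simp only [EV]; rw [h.fderiv]
  simp only [ContinuousLinearMap.smul_apply, ContinuousLinearMap.comp_apply,
    ContinuousLinearMap.smul_apply, Complex.ofRealCLM_apply, smul_eq_mul]
  push_cast
  ring
end EVrules

section EIterRules
variable {m : ℕ} {F G : Type*} [NormedAddCommGroup F] [NormedSpace ℝ F]
  [NormedAddCommGroup G] [NormedSpace ℝ G]

lemma diff_of_cd {f : P m → F} (h : ContDiff ℝ (⊤:ℕ∞) f) : Differentiable ℝ f :=
  h.differentiable (by simp)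

lemma contDiff_EIter (M : List (Fin m → Quaternion ℝ)) {f : P m → F}
    (hf : ContDiff ℝ (⊤:ℕ∞) f) : ContDiff ℝ (⊤:ℕ∞) (EIter m M f) := by
  induction M with
  | nil => exact hf
  | cons V M ih => exact contDiff_EV m V ih

lemma EIter_append (M L : List (Fin m → Quaternion ℝ)) (f : P m → F) :
    EIter m (M ++ L) f = EIter m M (EIter m L f) := by
  induction M with
  | nil => rfl
  | cons V M ih =>
      show EV m V (EIter m (M ++ L) f) = EV m V (EIter m M (EIter m L f))
      rw [ih]

lemma EIter_zero (M : List (Fin m → Quaternion ℝ)) :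
    EIter m M (fun _ : P m => (0:F)) = fun _ => 0 := by
  induction M with
  | nil => rfl
  | cons V M ih => show EV m V _ = _; rw [ih, EV_const]

lemma EIter_add (M : List (Fin m → Quaternion ℝ)) {f g : P m → F}
    (hf : ContDiff ℝ (⊤:ℕ∞) f) (hg : ContDiff ℝ (⊤:ℕ∞) g) :
    EIter m M (fun p => f p + g p) = fun p => EIter m M f p + EIter m M g p := by
  induction M with
  | nil => rfl
  | cons V M ih =>
      show EV m V _ = _
      rw [ih, EV_add V (diff_of_cd (contDiff_EIter M hf))
        (diff_of_cd (contDiff_EIter M hg))]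
      rfl

lemma EIter_neg (M : List (Fin m → Quaternion ℝ)) (f : P m → F) :
    EIter m M (fun p => -f p) = fun p => -EIter m M f p := by
  induction M with
  | nil => rfl
  | cons V M ih => show EV m V _ = _; rw [ih, EV_neg]; rfl

lemma EIter_smul (M : List (Fin m → Quaternion ℝ)) (c : ℝ) {f : P m → F}
    (hf : ContDiff ℝ (⊤:ℕ∞) f) :
    EIter m M (fun p => c • f p) = fun p => c • EIter m M f p := by
  induction M with
  | nil => rfl
  | cons V M ih =>
      show EV m V _ = _
      rw [ih, EV_smul V c (diff_of_cd (contDiff_EIter M hf))]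
      rfl

lemma EIter_clm (M : List (Fin m → Quaternion ℝ)) (L : F →L[ℝ] G) {f : P m → F}
    (hf : ContDiff ℝ (⊤:ℕ∞) f) :
    EIter m M (fun p => L (f p)) = fun p => L (EIter m M f p) := by
  induction M with
  | nil => rfl
  | cons V M ih =>
      show EV m V _ = _
      rw [ih, EV_clm V L (diff_of_cd (contDiff_EIter M hf))]
      rfl

lemma EIter_sum (M : List (Fin m → Quaternion ℝ)) {ι : Type*} (t : Finset ι)
    (f : ι → P m → F) (hf : ∀ i ∈ t, ContDiff ℝ (⊤:ℕ∞) (f i)) :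
    EIter m M (fun p => ∑ i ∈ t, f i p) = fun p => ∑ i ∈ t, EIter m M (f i) p := by
  classical
  induction t using Finset.induction_on with
  | empty => simpa using EIter_zero M
  | insert i t' hnotmem ih =>
      have h1 : (fun p => ∑ j ∈ insert i t', f j p)
          = fun p => f i p + ∑ j ∈ t', f j p := by
        funext p; rw [Finset.sum_insert hnotmem]
      rw [h1, EIter_add M (hf i (Finset.mem_insert_self i t'))
        (ContDiff.sum fun j hj => hf j (Finset.mem_insert_of_mem hj)),
        ih (fun j hj => hf j (Finset.mem_insert_of_mem hj))]
      funext p; rw [Finset.sum_insert hnotmem]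

lemma EIter_congr (M : List (Fin m → Quaternion ℝ)) {f g : P m → F} (h : f = g) :
    EIter m M f = EIter m M g := by rw [h]

end EIterRules

/-! ### The weight function and the bound predicate -/

noncomputable def Ba (m : ℕ) (a : ℝ) : P m → ℝ := fun p =>
  (a + (∑ j, Quaternion.normSq (p.1 j)) / 4) ^ 2 + Quaternion.normSq p.2

lemma BtF_eq_Ba (m : ℕ) (t : ℝ) : BtF m t = Ba m (Real.exp (-2*t)) := rfl

def UL (m : ℕ) (M : List (Fin m → Quaternion ℝ)) : Prop :=
  ∀ V ∈ M, ∑ k, Quaternion.normSq (V k) = 1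

def Bnd (m : ℕ) (a C k : ℝ) (J : ℕ) {F : Type*} [NormedAddCommGroup F] [NormedSpace ℝ F]
    (f : P m → F) : Prop :=
  ∀ M : List (Fin m → Quaternion ℝ), UL m M → M.length ≤ J → ∀ p,
    ‖EIter m M f p‖ ≤ C * Ba m a p ^ ((k - M.length)/4)

section Geometry
variable {m : ℕ} {a : ℝ}

lemma nsum_nonneg (p : P m) : 0 ≤ ∑ j, Quaternion.normSq (p.1 j) :=
  Finset.sum_nonneg fun _ _ => Quaternion.normSq_nonneg

lemma u_pos (ha : 0 < a) (p : P m) : 0 < a + (∑ j, Quaternion.normSq (p.1 j)) / 4 := by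
  have := nsum_nonneg p; linarith

lemma Ba_pos (ha : 0 < a) (p : P m) : 0 < Ba m a p :=
  add_pos_of_pos_of_nonneg (pow_pos (u_pos ha p) 2) Quaternion.normSq_nonneg

lemma rpow_Ba_nonneg (ha : 0 < a) (p : P m) (x : ℝ) : 0 ≤ Ba m a p ^ x :=
  Real.rpow_nonneg (Ba_pos ha p).le x

lemma le_rpow_half (ha : 0 < a) (p : P m) {c : ℝ} (hc : 0 ≤ c) (h : c^2 ≤ Ba m a p) :
    c ≤ Ba m a p ^ ((2:ℝ)/4) := by
  have he : Ba m a p ^ ((2:ℝ)/4) = Real.sqrt (Ba m a p) := by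
    rw [show (2:ℝ)/4 = 1/2 by norm_num, Real.sqrt_eq_rpow]
  rw [he]
  calc c = Real.sqrt (c^2) := (Real.sqrt_sq hc).symm
    _ ≤ Real.sqrt (Ba m a p) := Real.sqrt_le_sqrt h

lemma le_two_rpow_quarter (ha : 0 < a) (p : P m) {c : ℝ} (hc : 0 ≤ c)
    (h : c^2 ≤ 4 * Ba m a p ^ ((2:ℝ)/4)) : c ≤ 2 * Ba m a p ^ ((1:ℝ)/4) := by
  have hB := Ba_pos ha p
  have h1 : Real.sqrt (Ba m a p ^ ((2:ℝ)/4)) = Ba m a p ^ ((1:ℝ)/4) := by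
    rw [Real.sqrt_eq_rpow, ← Real.rpow_mul hB.le]
    norm_num
  calc c = Real.sqrt (c^2) := (Real.sqrt_sq hc).symm
    _ ≤ Real.sqrt (4 * Ba m a p ^ ((2:ℝ)/4)) := Real.sqrt_le_sqrt h
    _ = 2 * Ba m a p ^ ((1:ℝ)/4) := by
        have h4 : Real.sqrt 4 = 2 := by
          rw [show (4:ℝ) = 2^2 by norm_num]
          exact Real.sqrt_sq (by norm_num)
        rw [Real.sqrt_mul (by norm_num : (0:ℝ) ≤ 4), h1, h4]

lemma bnd_u (ha : 0 < a) (p : P m) :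
    a + (∑ j, Quaternion.normSq (p.1 j)) / 4 ≤ Ba m a p ^ ((2:ℝ)/4) :=
  le_rpow_half ha p (u_pos ha p).le (by
    simp only [Ba]
    exact le_add_of_nonneg_right Quaternion.normSq_nonneg)

lemma bnd_a (ha : 0 < a) (p : P m) : a ≤ Ba m a p ^ ((2:ℝ)/4) := by
  have := bnd_u ha p; have := nsum_nonneg p; linarith

lemma bnd_n (ha : 0 < a) (p : P m) :
    (∑ j, Quaternion.normSq (p.1 j)) ≤ 4 * Ba m a p ^ ((2:ℝ)/4) := by
  have := bnd_u ha p; linarith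

lemma bnd_x (ha : 0 < a) (p : P m) (j : Fin m) : ‖p.1 j‖ ≤ 2 * Ba m a p ^ ((1:ℝ)/4) := by
  apply le_two_rpow_quarter ha p (norm_nonneg _)
  have h1 : ‖p.1 j‖^2 = Quaternion.normSq (p.1 j) := by
    rw [sq, ← Quaternion.normSq_eq_norm_mul_self]
  rw [h1]
  refine le_trans ?_ (bnd_n ha p)
  exact Finset.single_le_sum (f := fun i => Quaternion.normSq (p.1 i))
    (fun i _ => Quaternion.normSq_nonneg) (Finset.mem_univ j)

lemma bnd_z (ha : 0 < a) (p : P m) : ‖p.2‖ ≤ Ba m a p ^ ((2:ℝ)/4) := by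
  apply le_rpow_half ha p (norm_nonneg _)
  have h1 : ‖p.2‖^2 = Quaternion.normSq p.2 := by
    rw [sq, ← Quaternion.normSq_eq_norm_mul_self]
  rw [h1, Ba]
  nlinarith [sq_nonneg (a + (∑ j, Quaternion.normSq (p.1 j)) / 4)]

end Geometry

section BndRules
variable {m : ℕ} {a : ℝ} {E F G : Type*} [NormedAddCommGroup E] [NormedSpace ℝ E]
  [NormedAddCommGroup F] [NormedSpace ℝ F] [NormedAddCommGroup G] [NormedSpace ℝ G]

lemma Bnd.mono (ha : 0 < a) {C C' k : ℝ} {J : ℕ} {f : P m → F} (hC : C ≤ C')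
    (h : Bnd m a C k J f) : Bnd m a C' k J f := fun M hM hlen p =>
  le_trans (h M hM hlen p) (mul_le_mul_of_nonneg_right hC (rpow_Ba_nonneg ha p _))

lemma Bnd.of_budget_le {C k : ℝ} {J J' : ℕ} {f : P m → F} (hJ : J' ≤ J)
    (h : Bnd m a C k J f) : Bnd m a C k J' f := fun M hM hlen p =>
  h M hM (le_trans hlen hJ) p

lemma Bnd.add {C1 C2 k : ℝ} {J : ℕ} {f g : P m → F}
    (hf : ContDiff ℝ (⊤:ℕ∞) f) (hg : ContDiff ℝ (⊤:ℕ∞) g)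
    (h1 : Bnd m a C1 k J f) (h2 : Bnd m a C2 k J g) :
    Bnd m a (C1 + C2) k J (fun p => f p + g p) := by
  intro M hM hlen p
  rw [EIter_add M hf hg]
  calc ‖EIter m M f p + EIter m M g p‖ ≤ ‖EIter m M f p‖ + ‖EIter m M g p‖ := norm_add_le _ _
    _ ≤ C1 * Ba m a p ^ ((k - M.length)/4) + C2 * Ba m a p ^ ((k - M.length)/4) :=
        add_le_add (h1 M hM hlen p) (h2 M hM hlen p)
    _ = (C1 + C2) * Ba m a p ^ ((k - M.length)/4) := by ring

lemma Bnd.neg {C k : ℝ} {J : ℕ} {f : P m → F} (h : Bnd m a C k J f) :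
    Bnd m a C k J (fun p => -f p) := by
  intro M hM hlen p
  rw [EIter_neg M f]
  simpa using h M hM hlen p

lemma Bnd.smul {C k : ℝ} {J : ℕ} {f : P m → F} (c : ℝ) (hf : ContDiff ℝ (⊤:ℕ∞) f)
    (h : Bnd m a C k J f) : Bnd m a (|c| * C) k J (fun p => c • f p) := by
  intro M hM hlen p
  rw [EIter_smul M c hf]
  rw [norm_smul, Real.norm_eq_abs, mul_assoc]
  exact mul_le_mul_of_nonneg_left (h M hM hlen p) (abs_nonneg c)

lemma Bnd.clm {C k : ℝ} {J : ℕ} {f : P m → F} (L : F →L[ℝ] G) (hC : 0 ≤ C)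
    (hf : ContDiff ℝ (⊤:ℕ∞) f) (h : Bnd m a C k J f) :
    Bnd m a (‖L‖ * C) k J (fun p => L (f p)) := by
  intro M hM hlen p
  rw [EIter_clm M L hf]
  calc ‖L (EIter m M f p)‖ ≤ ‖L‖ * ‖EIter m M f p‖ := L.le_opNorm _
    _ ≤ ‖L‖ * (C * Ba m a p ^ ((k - M.length)/4)) :=
        mul_le_mul_of_nonneg_left (h M hM hlen p) (norm_nonneg L)
    _ = ‖L‖ * C * Ba m a p ^ ((k - M.length)/4) := by ring

lemma Bnd.sum {ι : Type*} {k : ℝ} {J : ℕ} (t : Finset ι) (f : ι → P m → F) (C : ι → ℝ)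
    (hf : ∀ i ∈ t, ContDiff ℝ (⊤:ℕ∞) (f i)) (h : ∀ i ∈ t, Bnd m a (C i) k J (f i)) :
    Bnd m a (∑ i ∈ t, C i) k J (fun p => ∑ i ∈ t, f i p) := by
  intro M hM hlen p
  rw [EIter_sum M t f hf]
  calc ‖∑ i ∈ t, EIter m M (f i) p‖ ≤ ∑ i ∈ t, ‖EIter m M (f i) p‖ := norm_sum_le _ _
    _ ≤ ∑ i ∈ t, C i * Ba m a p ^ ((k - M.length)/4) :=
        Finset.sum_le_sum fun i hi => h i hi M hM hlen p
    _ = (∑ i ∈ t, C i) * Ba m a p ^ ((k - M.length)/4) := by rw [Finset.sum_mul]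

lemma Bnd.ev {C k : ℝ} {J : ℕ} {f : P m → F} (V : Fin m → Quaternion ℝ)
    (hV : ∑ k, Quaternion.normSq (V k) = 1) (h : Bnd m a C k (J+1) f) :
    Bnd m a C (k-1) J (EV m V f) := by
  intro M hM hlen p
  have h1 : EIter m M (EV m V f) = EIter m (M ++ [V]) f := by
    rw [EIter_append]; rfl
  have h2 : UL m (M ++ [V]) := by
    intro W hW
    rcases List.mem_append.mp hW with hW | hW
    · exact hM W hW
    · rw [List.mem_singleton.mp hW]; exact hV
  have h3 := h (M ++ [V]) h2 (by simp [List.length_append]; omega) p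
  rw [h1]
  have he : ((k:ℝ) - ((M ++ [V]).length : ℝ))/4 = ((k-1) - (M.length:ℝ))/4 := by
    simp [List.length_append]
    push_cast
    ring
  rw [he] at h3
  exact h3
end BndRules

section ProdRule
variable {m : ℕ} {a : ℝ} {E F G : Type*} [NormedAddCommGroup E] [NormedSpace ℝ E]
  [NormedAddCommGroup F] [NormedSpace ℝ F] [NormedAddCommGroup G] [NormedSpace ℝ G]

lemma UL_nil : UL m [] := by intro W hW; simp at hW

lemma EIter_concat (M' : List (Fin m → Quaternion ℝ)) (V : Fin m → Quaternion ℝ)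
    {H : Type*} [NormedAddCommGroup H] [NormedSpace ℝ H] (f : P m → H) :
    EIter m (M'.concat V) f = EIter m M' (EV m V f) := by
  rw [List.concat_eq_append, EIter_append]; rfl

lemma contDiff_bilin (bl : E →L[ℝ] F →L[ℝ] G) {f : P m → E} {g : P m → F}
    (hf : ContDiff ℝ (⊤:ℕ∞) f) (hg : ContDiff ℝ (⊤:ℕ∞) g) :
    ContDiff ℝ (⊤:ℕ∞) (fun p => bl (f p) (g p)) :=
  (bl.contDiff.comp hf).clm_apply hg

lemma one_le_two_pow (J : ℕ) : (1:ℝ) ≤ 2^J := one_le_pow₀ (by norm_num)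

lemma Bnd_prod_nil (ha : 0 < a) (bl : E →L[ℝ] F →L[ℝ] G) {k l Cf Cg : ℝ} {x : E} {y : F}
    (p : P m) (hCf : 0 ≤ Cf) (hCg : 0 ≤ Cg)
    (hx : ‖x‖ ≤ Cf * Ba m a p ^ (k/4)) (hy : ‖y‖ ≤ Cg * Ba m a p ^ (l/4)) :
    ‖bl x y‖ ≤ ‖bl‖ * (Cf * Cg) * Ba m a p ^ ((k+l)/4) := by
  have hBB : Ba m a p ^ (k/4) * Ba m a p ^ (l/4) = Ba m a p ^ ((k+l)/4) := by
    rw [← Real.rpow_add (Ba_pos ha p)]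
    congr 1; ring
  calc ‖bl x y‖ ≤ ‖bl‖ * ‖x‖ * ‖y‖ := bl.le_opNorm₂ x y
    _ ≤ ‖bl‖ * (Cf * Ba m a p ^ (k/4)) * (Cg * Ba m a p ^ (l/4)) :=
        mul_le_mul (mul_le_mul_of_nonneg_left hx (norm_nonneg bl)) hy (norm_nonneg y)
          (mul_nonneg (norm_nonneg bl) (mul_nonneg hCf (Real.rpow_nonneg (Ba_pos ha p).le _)))
    _ = ‖bl‖ * (Cf * Cg) * (Ba m a p ^ (k/4) * Ba m a p ^ (l/4)) := by ring
    _ = ‖bl‖ * (Cf * Cg) * Ba m a p ^ ((k+l)/4) := by rw [hBB]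

lemma Bnd_prod_aux (ha : 0 < a) (bl : E →L[ℝ] F →L[ℝ] G) :
    ∀ (J : ℕ) (k l Cf Cg : ℝ) (f : P m → E) (g : P m → F), 0 ≤ Cf → 0 ≤ Cg →
      ContDiff ℝ (⊤:ℕ∞) f → ContDiff ℝ (⊤:ℕ∞) g →
      Bnd m a Cf k J f → Bnd m a Cg l J g →
      Bnd m a (2^J * (‖bl‖ * (Cf * Cg))) (k + l) J (fun p => bl (f p) (g p)) := by
  intro J
  induction J with
  | zero =>
      intro k l Cf Cg f g hCf hCg hf hg hBf hBg M hM hlen p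
      have hM0 : M = [] := List.length_eq_zero_iff.mp (Nat.le_zero.mp hlen)
      subst hM0
      have h1 := hBf [] UL_nil (Nat.zero_le _) p
      have h2 := hBg [] UL_nil (Nat.zero_le _) p
      simp only [List.length_nil, Nat.cast_zero, sub_zero] at h1 h2 ⊢
      simpa [EIter] using Bnd_prod_nil ha bl p hCf hCg h1 h2
  | succ J ih =>
      intro k l Cf Cg f g hCf hCg hf hg hBf hBg M hM hlen p
      rcases List.eq_nil_or_concat M with rfl | ⟨M', V, rfl⟩
      · have h1 := hBf [] UL_nil (Nat.zero_le _) p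
        have h2 := hBg [] UL_nil (Nat.zero_le _) p
        simp only [List.length_nil, Nat.cast_zero, sub_zero] at h1 h2 ⊢
        calc ‖bl (f p) (g p)‖ ≤ ‖bl‖ * (Cf * Cg) * Ba m a p ^ ((k+l)/4) :=
              Bnd_prod_nil ha bl p hCf hCg h1 h2
          _ ≤ 2^(J+1) * (‖bl‖ * (Cf * Cg)) * Ba m a p ^ ((k+l)/4) := by
              apply mul_le_mul_of_nonneg_right _ (rpow_Ba_nonneg ha p _)
              nlinarith [one_le_two_pow (J+1), norm_nonneg bl,
                mul_nonneg (mul_nonneg (norm_nonneg bl) (mul_nonneg hCf hCg))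
                  (sub_nonneg.mpr (one_le_two_pow (J+1)))]
      · have hV : ∑ k, Quaternion.normSq (V k) = 1 := hM V (by simp)
        have hM' : UL m M' := fun W hW => hM W (by simp [List.concat_eq_append]; tauto)
        have hlen' : M'.length ≤ J := by
          rw [List.length_concat] at hlen; omega
        rw [EIter_concat, EV_bilin V bl (diff_of_cd hf) (diff_of_cd hg),
          EIter_add M' (contDiff_bilin bl (contDiff_EV m V hf) hg)
            (contDiff_bilin bl hf (contDiff_EV m V hg))]
        have t1 := ih (k-1) l Cf Cg (EV m V f) g hCf hCg (contDiff_EV m V hf) hg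
          (Bnd.ev V hV hBf) (hBg.of_budget_le (Nat.le_succ J)) M' hM' hlen' p
        have t2 := ih k (l-1) Cf Cg f (EV m V g) hCf hCg hf (contDiff_EV m V hg) (hBf.of_budget_le (Nat.le_succ J))
          (Bnd.ev V hV hBg) M' hM' hlen' p
        have he1 : ((k-1) + l - (M'.length:ℝ))/4 = (k + l - ((M'.concat V).length:ℝ))/4 := by
          rw [List.length_concat]; push_cast; ring
        have he2 : (k + (l-1) - (M'.length:ℝ))/4 = (k + l - ((M'.concat V).length:ℝ))/4 := by
          rw [List.length_concat]; push_cast; ring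
        rw [he1] at t1; rw [he2] at t2
        calc ‖EIter m M' (fun p => bl (EV m V f p) (g p)) p
              + EIter m M' (fun p => bl (f p) (EV m V g p)) p‖
            ≤ ‖EIter m M' (fun p => bl (EV m V f p) (g p)) p‖
              + ‖EIter m M' (fun p => bl (f p) (EV m V g p)) p‖ := norm_add_le _ _
          _ ≤ 2^J * (‖bl‖ * (Cf * Cg)) * Ba m a p ^ ((k + l - ((M'.concat V).length:ℝ))/4)
              + 2^J * (‖bl‖ * (Cf * Cg)) * Ba m a p ^ ((k + l - ((M'.concat V).length:ℝ))/4) :=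
              add_le_add t1 t2
          _ = 2^(J+1) * (‖bl‖ * (Cf * Cg)) * Ba m a p ^ ((k + l - ((M'.concat V).length:ℝ))/4) := by
              ring

lemma Bnd.prod {J : ℕ} {k l Cf Cg : ℝ} {f : P m → E} {g : P m → F}
    (ha : 0 < a) (bl : E →L[ℝ] F →L[ℝ] G) (hCf : 0 ≤ Cf) (hCg : 0 ≤ Cg)
    (hf : ContDiff ℝ (⊤:ℕ∞) f) (hg : ContDiff ℝ (⊤:ℕ∞) g)
    (hBf : Bnd m a Cf k J f) (hBg : Bnd m a Cg l J g) :
    Bnd m a (2^J * (‖bl‖ * (Cf * Cg))) (k + l) J (fun p => bl (f p) (g p)) :=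
  Bnd_prod_aux ha bl J k l Cf Cg f g hCf hCg hf hg hBf hBg

end ProdRule

section Atoms
variable {m : ℕ} {a : ℝ} {F : Type*} [NormedAddCommGroup F] [NormedSpace ℝ F]

lemma norm_le_one_of_unit {V : Fin m → Quaternion ℝ}
    (hV : ∑ k, Quaternion.normSq (V k) = 1) (j : Fin m) : ‖V j‖ ≤ 1 := by
  have h1 : Quaternion.normSq (V j) ≤ 1 := by
    rw [← hV]
    exact Finset.single_le_sum (f := fun i => Quaternion.normSq (V i))
      (fun i _ => Quaternion.normSq_nonneg) (Finset.mem_univ j)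
  have h2 : ‖V j‖ * ‖V j‖ ≤ 1 := by rw [← Quaternion.normSq_eq_norm_mul_self]; exact h1
  nlinarith [norm_nonneg (V j)]

lemma Bnd_const (ha : 0 < a) (J : ℕ) (c : F) : Bnd m a ‖c‖ 0 J (fun _ : P m => c) := by
  intro M hM hlen p
  rcases List.eq_nil_or_concat M with rfl | ⟨M', V, rfl⟩
  · simp only [EIter, List.length_nil, Nat.cast_zero, sub_zero, zero_div, Real.rpow_zero,
      mul_one, le_refl]
  · rw [EIter_concat, EV_const, EIter_zero]
    simp only [norm_zero]
    exact mul_nonneg (norm_nonneg c) (rpow_Ba_nonneg ha p _)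

lemma Bnd_const_a (ha : 0 < a) (J : ℕ) : Bnd m a 1 2 J (fun _ : P m => a) := by
  intro M hM hlen p
  rcases List.eq_nil_or_concat M with rfl | ⟨M', V, rfl⟩
  · simp only [EIter, List.length_nil, Nat.cast_zero, sub_zero, one_mul]
    rw [Real.norm_eq_abs, abs_of_pos ha]
    exact bnd_a ha p
  · rw [EIter_concat, EV_const, EIter_zero]
    simp only [norm_zero]
    exact mul_nonneg zero_le_one (rpow_Ba_nonneg ha p _)

lemma contDiff_xj (j : Fin m) : ContDiff ℝ (⊤:ℕ∞) (fun p : P m => p.1 j) :=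
  ((ContinuousLinearMap.proj j).comp
    (ContinuousLinearMap.fst ℝ (Fin m → Quaternion ℝ) (Quaternion ℝ))).contDiff

lemma contDiff_z : ContDiff ℝ (⊤:ℕ∞) (fun p : P m => p.2) :=
  (ContinuousLinearMap.snd ℝ (Fin m → Quaternion ℝ) (Quaternion ℝ)).contDiff

lemma Bnd_xj (ha : 0 < a) (J : ℕ) (j : Fin m) : Bnd m a 2 1 J (fun p : P m => p.1 j) := by
  intro M hM hlen p
  rcases List.eq_nil_or_concat M with rfl | ⟨M', V, rfl⟩
  · simp only [EIter, List.length_nil, Nat.cast_zero, sub_zero]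
    exact bnd_x ha p j
  · have hV : ∑ k, Quaternion.normSq (V k) = 1 := hM V (by simp)
    rw [EIter_concat, EV_proj V j]
    have h1 := Bnd_const ha J (V j) M' (fun W hW => hM W (by simp [List.concat_eq_append]; tauto))
      (by rw [List.length_concat] at hlen; omega) p
    have he : ((0:ℝ) - (M'.length:ℝ))/4 = (1 - ((M'.concat V).length:ℝ))/4 := by
      rw [List.length_concat]; push_cast; ring
    rw [he] at h1
    refine le_trans h1 ?_
    apply mul_le_mul_of_nonneg_right _ (rpow_Ba_nonneg ha p _)
    exact le_trans (norm_le_one_of_unit hV j) one_le_two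

/-- derivative of the second coordinate: `E_V z = ∑ⱼ Lq (V j) (X j)`. -/
lemma EV_snd_eq (V : Fin m → Quaternion ℝ) :
    EV m V (fun p : P m => p.2) = fun p => ∑ j, Lq (V j) (p.1 j) := by
  rw [EV_snd]
  funext p
  have h : qIm (∑ j, star (p.1 j) * V j) = ∑ j, qIm (star (p.1 j) * V j) :=
    map_sum qImHom _ _
  rw [h, Finset.sum_div]
  rfl

lemma Bnd_z2 (ha : 0 < a) (J : ℕ) : Bnd m a (1 + 2*m) 2 J (fun p : P m => p.2) := by
  intro M hM hlen p
  have hc : (0:ℝ) ≤ 1 + 2*m := by positivity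
  rcases List.eq_nil_or_concat M with rfl | ⟨M', V, rfl⟩
  · simp only [EIter, List.length_nil, Nat.cast_zero, sub_zero]
    refine le_trans (bnd_z ha p) ?_
    nlinarith [rpow_Ba_nonneg ha p ((2:ℝ)/4), Nat.cast_nonneg (α := ℝ) m]
  · have hV : ∑ k, Quaternion.normSq (V k) = 1 := hM V (by simp)
    have hM' : UL m M' := fun W hW => hM W (by simp [List.concat_eq_append]; tauto)
    have hlen' : M'.length ≤ J := by rw [List.length_concat] at hlen; omega
    rw [EIter_concat, EV_snd_eq V]
    -- each term `p ↦ Lq (V j) (p.1 j)` satisfies `Bnd m a 2 1 J`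
    have hterm : ∀ j : Fin m, Bnd m a (‖Lq (V j)‖ * 2) 1 J (fun p : P m => Lq (V j) (p.1 j)) :=
      fun j => Bnd.clm (Lq (V j)) (by norm_num) (contDiff_xj j) (Bnd_xj ha J j)
    have hterm2 : ∀ j : Fin m, Bnd m a 2 1 J (fun p : P m => Lq (V j) (p.1 j)) := by
      intro j
      refine Bnd.mono ha ?_ (hterm j)
      have := norm_Lq_le (V j)
      have := norm_le_one_of_unit hV j
      have := norm_nonneg (Lq (V j))
      nlinarith
    have hsum := Bnd.sum (Finset.univ) (fun j (p : P m) => Lq (V j) (p.1 j)) (fun _ => 2)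
      (fun j _ => (Lq (V j)).contDiff.comp (contDiff_xj j)) (fun j _ => hterm2 j)
    simp only [Finset.sum_const, Finset.card_univ, Fintype.card_fin, nsmul_eq_mul] at hsum
    have h1 := hsum M' hM' hlen' p
    have he : ((1:ℝ) - (M'.length:ℝ))/4 = (2 - ((M'.concat V).length:ℝ))/4 := by
      rw [List.length_concat]; push_cast; ring
    rw [he] at h1
    refine le_trans h1 ?_
    apply mul_le_mul_of_nonneg_right _ (rpow_Ba_nonneg ha p _)
    nlinarith [Nat.cast_nonneg (α := ℝ) m]

end Atoms

section Bfacts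
variable {m : ℕ} {a : ℝ}

noncomputable def uFun (m : ℕ) (a : ℝ) : P m → ℝ := fun p =>
  a + (∑ j, Quaternion.normSq (p.1 j)) / 4

lemma uFun_eq (m : ℕ) (a : ℝ) : uFun m a = fun p =>
    (fun _ : P m => a) p + (1/4:ℝ) • (∑ j, bilQ (p.1 j) (p.1 j)) := by
  funext p
  simp only [uFun, bilQ_self, smul_eq_mul]
  ring

lemma contDiff_quad : ContDiff ℝ (⊤:ℕ∞) (fun p : P m => ∑ j, bilQ (p.1 j) (p.1 j)) :=
  ContDiff.sum fun j _ => contDiff_bilin bilQ (contDiff_xj j) (contDiff_xj j)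

lemma contDiff_u : ContDiff ℝ (⊤:ℕ∞) (uFun m a) := by
  rw [uFun_eq]
  exact ContDiff.add contDiff_const (contDiff_quad.const_smul _)

lemma Ba_eq (m : ℕ) (a : ℝ) : Ba m a = fun p =>
    (ContinuousLinearMap.mul ℝ ℝ) (uFun m a p) (uFun m a p) + bilQ p.2 p.2 := by
  funext p
  simp only [Ba, ContinuousLinearMap.mul_apply', bilQ_self, uFun, sq]

lemma contDiff_Ba : ContDiff ℝ (⊤:ℕ∞) (Ba m a) := by
  rw [Ba_eq]
  exact ContDiff.add (contDiff_bilin _ contDiff_u contDiff_u)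
    (contDiff_bilin bilQ contDiff_z contDiff_z)

lemma contDiff_Binv (ha : 0 < a) : ContDiff ℝ (⊤:ℕ∞) (fun p => (Ba m a p)⁻¹) :=
  contDiff_Ba.inv (fun p => (Ba_pos ha p).ne')

lemma Bnd_u (J : ℕ) : ∃ C : ℝ, 0 ≤ C ∧ ∀ a : ℝ, 0 < a → Bnd m a C 2 J (uFun m a) := by
  refine ⟨1 + |1/4| * ((m:ℝ) * (2^J * (‖bilQ‖*(2*2)))), by positivity, fun a ha => ?_⟩
  have hq : ∀ j : Fin m, Bnd m a (2^J * (‖bilQ‖*(2*2))) 2 J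
      (fun p : P m => bilQ (p.1 j) (p.1 j)) := by
    intro j
    have := Bnd.prod (J := J) ha bilQ (by norm_num) (by norm_num) (contDiff_xj j)
      (contDiff_xj j) (Bnd_xj ha J j) (Bnd_xj ha J j)
    rwa [show ((1:ℝ)+1) = 2 by norm_num] at this
  have hsum := Bnd.sum (Finset.univ) (fun j (p : P m) => bilQ (p.1 j) (p.1 j))
    (fun _ => 2^J * (‖bilQ‖*(2*2)))
    (fun j _ => contDiff_bilin bilQ (contDiff_xj j) (contDiff_xj j)) (fun j _ => hq j)
  simp only [Finset.sum_const, Finset.card_univ, Fintype.card_fin, nsmul_eq_mul] at hsum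
  have hsmul := Bnd.smul (1/4 : ℝ) contDiff_quad hsum
  have hadd := Bnd.add contDiff_const (contDiff_quad.const_smul _) (Bnd_const_a ha J) hsmul
  rw [← uFun_eq] at hadd
  exact hadd

lemma Bnd_Ba (J : ℕ) : ∃ C : ℝ, 0 ≤ C ∧ ∀ a : ℝ, 0 < a → Bnd m a C 4 J (Ba m a) := by
  obtain ⟨Cu, hCu, hu⟩ := Bnd_u (m := m) J
  refine ⟨2^J * (‖ContinuousLinearMap.mul ℝ ℝ‖ * (Cu * Cu))
    + 2^J * (‖bilQ‖ * ((1 + 2*(m:ℝ)) * (1 + 2*(m:ℝ)))), by positivity, fun a ha => ?_⟩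
  have h1 := Bnd.prod (J := J) ha (ContinuousLinearMap.mul ℝ ℝ) hCu hCu contDiff_u contDiff_u
    (hu a ha) (hu a ha)
  have h2 := Bnd.prod (m := m) (J := J) ha bilQ (by positivity) (by positivity)
    (contDiff_z (m := m)) (contDiff_z (m := m)) (Bnd_z2 ha J) (Bnd_z2 ha J)
  rw [show ((2:ℝ)+2) = 4 by norm_num] at h1 h2
  have hadd := Bnd.add (contDiff_bilin _ contDiff_u contDiff_u)
    (contDiff_bilin bilQ contDiff_z contDiff_z) h1 h2
  rw [← Ba_eq] at hadd
  exact hadd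

lemma Bnd_EVB (J : ℕ) : ∃ C : ℝ, 0 ≤ C ∧ ∀ a : ℝ, 0 < a → ∀ V : Fin m → Quaternion ℝ,
    (∑ k, Quaternion.normSq (V k) = 1) → Bnd m a C 3 J (EV m V (Ba m a)) := by
  obtain ⟨C, hC, h⟩ := Bnd_Ba (m := m) (J+1)
  refine ⟨C, hC, fun a ha V hV => ?_⟩
  have := Bnd.ev V hV (h a ha)
  rwa [show ((4:ℝ)-1) = 3 by norm_num] at this

lemma Bnd_Binv (J : ℕ) : ∃ C : ℝ, 0 ≤ C ∧ ∀ a : ℝ, 0 < a →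
    Bnd m a C (-4) J (fun p => (Ba m a p)⁻¹) := by
  induction J with
  | zero =>
      refine ⟨1, zero_le_one, fun a ha => ?_⟩
      intro M hM hlen p
      have hM0 : M = [] := List.length_eq_zero_iff.mp (Nat.le_zero.mp hlen)
      subst hM0
      simp only [EIter, List.length_nil, Nat.cast_zero, sub_zero, one_mul]
      rw [Real.norm_eq_abs, abs_of_pos (inv_pos.mpr (Ba_pos ha p)),
        show ((-4:ℝ))/4 = -1 by norm_num, Real.rpow_neg_one]
  | succ J ih =>
      obtain ⟨C1, hC1, h1⟩ := ih
      obtain ⟨CB, hCB, hB⟩ := Bnd_EVB (m := m) J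
      set mR := ContinuousLinearMap.mul ℝ ℝ with hmR
      set C2 := 2^J * (‖mR‖ * (C1 * C1)) with hC2def
      set C3 := 2^J * (‖mR‖ * (CB * C2)) with hC3def
      have hC2 : 0 ≤ C2 := by
        apply mul_nonneg (by positivity)
        exact mul_nonneg (ContinuousLinearMap.opNorm_nonneg _) (mul_nonneg hC1 hC1)
      have hC3 : 0 ≤ C3 := by
        apply mul_nonneg (by positivity)
        exact mul_nonneg (ContinuousLinearMap.opNorm_nonneg _) (mul_nonneg hCB hC2)
      refine ⟨1 + C3, by linarith, fun a ha => ?_⟩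
      intro M hM hlen p
      rcases List.eq_nil_or_concat M with rfl | ⟨M', V, rfl⟩
      · simp only [EIter, List.length_nil, Nat.cast_zero, sub_zero]
        rw [Real.norm_eq_abs, abs_of_pos (inv_pos.mpr (Ba_pos ha p)),
          show ((-4:ℝ))/4 = -1 by norm_num, Real.rpow_neg_one]
        nlinarith [inv_pos.mpr (Ba_pos ha p), hC3,
          mul_nonneg hC3 (inv_pos.mpr (Ba_pos ha p)).le]
      · have hV : ∑ k, Quaternion.normSq (V k) = 1 := hM V (by simp)
        have hM' : UL m M' := fun W hW => hM W (by simp [List.concat_eq_append]; tauto)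
        have hlen' : M'.length ≤ J := by rw [List.length_concat] at hlen; omega
        have hEV : EV m V (fun p => (Ba m a p)⁻¹)
            = fun p => -(mR (EV m V (Ba m a) p) (mR ((Ba m a p)⁻¹) ((Ba m a p)⁻¹))) := by
          rw [EV_inv V (Ba m a) (diff_of_cd contDiff_Ba) (fun p => (Ba_pos ha p).ne')]
          funext p
          simp only [hmR, ContinuousLinearMap.mul_apply']
          rw [sq, mul_inv]
          ring
        have hinner : Bnd m a C2 (-8) J
            (fun p => mR ((Ba m a p)⁻¹) ((Ba m a p)⁻¹)) := by
          have := Bnd.prod (J := J) ha mR hC1 hC1 (contDiff_Binv ha) (contDiff_Binv ha)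
            (h1 a ha) (h1 a ha)
          rwa [show ((-4:ℝ) + -4) = -8 by norm_num] at this
        have houter : Bnd m a C3 (-5) J
            (fun p => mR (EV m V (Ba m a) p) (mR ((Ba m a p)⁻¹) ((Ba m a p)⁻¹))) := by
          have := Bnd.prod (J := J) ha mR hCB hC2 (contDiff_EV m V contDiff_Ba)
            (contDiff_bilin mR (contDiff_Binv ha) (contDiff_Binv ha))
            (hB a ha V hV) hinner
          rwa [show ((3:ℝ) + -8) = -5 by norm_num] at this
        have hneg := houter.neg
        rw [EIter_concat, hEV]
        have h := hneg M' hM' hlen' p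
        have he : ((-5:ℝ) - (M'.length:ℝ))/4 = (-4 - ((M'.concat V).length:ℝ))/4 := by
          rw [List.length_concat]; push_cast; ring
        rw [he] at h
        refine le_trans h ?_
        apply mul_le_mul_of_nonneg_right _ (rpow_Ba_nonneg ha p _)
        linarith

end Bfacts

section MainInduction
variable {m : ℕ}

lemma Bnd_zero {a C k : ℝ} {J : ℕ} {F : Type*} [NormedAddCommGroup F] [NormedSpace ℝ F]
    (ha : 0 < a) (hC : 0 ≤ C) : Bnd m a C k J (fun _ : P m => (0:F)) := by
  intro M hM hlen p
  rw [EIter_zero]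
  simp only [norm_zero]
  exact mul_nonneg hC (rpow_Ba_nonneg ha p _)

lemma EV_sum (V : Fin m → Quaternion ℝ) {ι : Type*} (t : Finset ι)
    {F : Type*} [NormedAddCommGroup F] [NormedSpace ℝ F]
    (f : ι → P m → F) (hf : ∀ i ∈ t, ContDiff ℝ (⊤:ℕ∞) (f i)) :
    EV m V (fun p => ∑ i ∈ t, f i p) = fun p => ∑ i ∈ t, EV m V (f i) p :=
  EIter_sum [V] t f hf

lemma contDiff_log_Ba {a : ℝ} (ha : 0 < a) :
    ContDiff ℝ (⊤:ℕ∞) (fun p : P m => Real.log (Ba m a p)) :=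
  contDiff_Ba.log (fun p => (Ba_pos ha p).ne')

lemma contDiff_ftbB {a : ℝ} (ha : 0 < a) (c : ℂ) :
    ContDiff ℝ (⊤:ℕ∞) (fun p : P m => Complex.exp (c * ↑(Real.log (Ba m a p)))) := by
  apply Complex.contDiff_exp.comp
  exact contDiff_const.mul (Complex.ofRealCLM.contDiff.comp (contDiff_log_Ba ha))

lemma main_induction (m : ℕ) (s : ℕ) : ∀ K : ℕ, ∃ C : ℝ, 0 ≤ C ∧
    ∀ (L : List (Fin m → Quaternion ℝ)), L.length = s → UL m L → ∀ a : ℝ, 0 < a →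
    ∃ h : ℕ → P m → ℝ,
      (∀ r, ContDiff ℝ (⊤:ℕ∞) (h r)) ∧
      (∀ r, s < r → h r = fun _ => 0) ∧
      (∀ r, Bnd m a C (-(s:ℝ)) K (h r)) ∧
      (∀ b : ℝ, EIter m L (fun p => Complex.exp (Complex.I * b * Real.log (Ba m a p)))
        = fun p => Complex.exp (Complex.I * b * Real.log (Ba m a p))
            * ∑ r ∈ Finset.range (s+1), (Complex.I*b)^r * (h r p)) := by
  induction s with
  | zero =>
      intro K
      refine ⟨1, zero_le_one, fun L hlen hUL a ha => ?_⟩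
      have hL : L = [] := List.length_eq_zero_iff.mp hlen
      subst hL
      refine ⟨fun r => if r = 0 then (fun _ => 1) else (fun _ => 0), ?_, ?_, ?_, ?_⟩
      · intro r; by_cases hr : r = 0 <;> simp [hr] <;> exact contDiff_const
      · intro r hr
        have hr0 : r ≠ 0 := by omega
        simp [hr0]
      · intro r
        by_cases hr : r = 0
        · simp only [hr, if_pos]
          have := Bnd_const (m := m) ha K (1:ℝ)
          rw [norm_one] at this
          rwa [show (-(0:ℕ):ℝ) = 0 by norm_num]
        · simp only [hr, if_neg, ite_false]
          rw [show (-(0:ℕ):ℝ) = 0 by norm_num]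
          exact Bnd_zero ha zero_le_one
      · intro b
        funext p
        simp [EIter, Finset.sum_range_one]
  | succ s ih =>
      intro K
      obtain ⟨C, hC, IH⟩ := ih (K+1)
      obtain ⟨CB, hCBn, hB⟩ := Bnd_EVB (m := m) K
      obtain ⟨Ci, hCin, hIv⟩ := Bnd_Binv (m := m) K
      set mR := ContinuousLinearMap.mul ℝ ℝ with hmRdef
      set Cq := 2^K * (‖mR‖ * (CB * Ci)) with hCqdef
      have hCq : 0 ≤ Cq :=
        mul_nonneg (by positivity)
          (mul_nonneg (ContinuousLinearMap.opNorm_nonneg _) (mul_nonneg hCBn hCin))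
      set C' := C + 2^K * (‖mR‖ * (Cq * C)) with hC'def
      have hC' : 0 ≤ C' := by
        have : 0 ≤ 2^K * (‖mR‖ * (Cq * C)) :=
          mul_nonneg (by positivity)
            (mul_nonneg (ContinuousLinearMap.opNorm_nonneg _) (mul_nonneg hCq hC))
        linarith
      refine ⟨C', hC', fun L hlen hUL a ha => ?_⟩
      cases L with
      | nil => simp at hlen
      | cons V L' =>
        have hV : ∑ k, Quaternion.normSq (V k) = 1 := hUL V List.mem_cons_self
        have hUL' : UL m L' := fun W hW => hUL W (List.mem_cons_of_mem V hW)
        have hlen' : L'.length = s := by simpa using hlen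
        obtain ⟨h, hsm, hzero, hbnd, hid⟩ := IH L' hlen' hUL' a ha
        -- the symbol q = (E_V B) · B⁻¹
        set q : P m → ℝ := fun p => mR (EV m V (Ba m a) p) ((Ba m a p)⁻¹) with hqdef
        have hqsm : ContDiff ℝ (⊤:ℕ∞) q :=
          contDiff_bilin mR (contDiff_EV m V contDiff_Ba) (contDiff_Binv ha)
        have hqB : Bnd m a Cq (-1) K q := by
          have := Bnd.prod (J := K) ha mR hCBn hCin (contDiff_EV m V contDiff_Ba)
            (contDiff_Binv ha) (hB a ha V hV) (hIv a ha)
          rwa [show ((3:ℝ) + -4) = -1 by norm_num] at this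
        -- shifted family
        set hpred : ℕ → P m → ℝ := fun r => Nat.casesOn r (fun _ => 0) (fun r' => h r')
          with hpreddef
        have hpredsm : ∀ r, ContDiff ℝ (⊤:ℕ∞) (hpred r) := by
          intro r; cases r
          · exact contDiff_const
          · exact hsm _
        have hpredbnd : ∀ r, Bnd m a C (-(s:ℝ)) K (hpred r) := by
          intro r; cases r
          · exact Bnd_zero ha hC
          · exact (hbnd _).of_budget_le (Nat.le_succ K)
        set h' : ℕ → P m → ℝ := fun r p => EV m V (h r) p + mR (q p) (hpred r p) with h'def
        refine ⟨h', ?_, ?_, ?_, ?_⟩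
        · intro r
          exact ((contDiff_EV m V (hsm r)).add (contDiff_bilin mR hqsm (hpredsm r)))
        · intro r hr
          have h1 : h r = fun _ => 0 := hzero r (by omega)
          funext p
          simp only [h'def]
          rw [h1, EV_const]
          cases r with
          | zero => simp [hpreddef]
          | succ r' =>
              have h3 : h r' = fun _ => 0 := hzero r' (by omega)
              simp only [hpreddef, h3]
              simp
        · intro r
          have hEVbnd : Bnd m a C (-(s:ℝ)-1) K (EV m V (h r)) := Bnd.ev V hV (hbnd r)
          have hprod := Bnd.prod (J := K) ha mR hCq hC hqsm (hpredsm r) hqB (hpredbnd r)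
          rw [show ((-1:ℝ) + -(s:ℝ)) = (-(s:ℝ)-1) by ring] at hprod
          have hadd := Bnd.add (contDiff_EV m V (hsm r)) (contDiff_bilin mR hqsm (hpredsm r))
            hEVbnd hprod
          rwa [show (-((s:ℕ)+1:ℕ):ℝ) = (-(s:ℝ)-1) by push_cast; ring]
        · intro b
          set F : P m → ℂ := fun p => Complex.exp (Complex.I * b * Real.log (Ba m a p))
            with hFdef
          set G : P m → ℂ := fun p => ∑ r ∈ Finset.range (s+1), (Complex.I*b)^r * (h r p)
            with hGdef
          set mC := ContinuousLinearMap.mul ℝ ℂ with hmCdef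
          have hFsm : ContDiff ℝ (⊤:ℕ∞) F := contDiff_ftbB ha _
          set Mc : ℕ → (ℝ →L[ℝ] ℂ) := fun r => (mC ((Complex.I * b)^r)).comp Complex.ofRealCLM
            with hMcdef
          have hGsm : ContDiff ℝ (⊤:ℕ∞) G := by
            apply ContDiff.sum
            intro r _
            exact (Mc r).contDiff.comp (hsm r)
          have step1 : EIter m (V :: L') F = EV m V (fun p => mC (F p) (G p)) := by
            show EV m V (EIter m L' F) = _
            rw [hid b]
            rfl
          have step2 : EV m V (fun p => mC (F p) (G p))
              = fun p => mC (EV m V F p) (G p) + mC (F p) (EV m V G p) :=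
            EV_bilin V mC (diff_of_cd hFsm) (diff_of_cd hGsm)
          have hEVF : EV m V F = fun p => F p * (Complex.I * b
              * (((Ba m a p):ℂ)⁻¹ * (EV m V (Ba m a) p : ℝ))) := by
            have := EV_exp_log V (Complex.I * b) (Ba m a) (diff_of_cd contDiff_Ba)
              (Ba_pos ha)
            rw [hFdef]
            rw [this]
            funext p
            push_cast
            ring
          have hEVG : EV m V G = fun p => ∑ r ∈ Finset.range (s+1),
              (Complex.I*b)^r * (EV m V (h r) p : ℝ) := by
            rw [hGdef]
            have e1 : (fun p => ∑ r ∈ Finset.range (s+1), (Complex.I*b)^r * ((h r p : ℝ) : ℂ))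
                = fun p => ∑ r ∈ Finset.range (s+1), Mc r (h r p) := rfl
            rw [e1, EV_sum V (Finset.range (s+1)) (fun r p => Mc r (h r p))
              (fun r _ => (Mc r).contDiff.comp (hsm r))]
            funext p
            apply Finset.sum_congr rfl
            intro r _
            rw [EV_clm V (Mc r) (diff_of_cd (hsm r))]
            rfl
          rw [step1, step2, hEVF, hEVG]
          funext p
          simp only [hmCdef, ContinuousLinearMap.mul_apply']
          -- now a pure algebraic identity
          have hEVtop : EV m V (h (s+1)) p = 0 := by
            rw [hzero (s+1) (Nat.lt_succ_self s), EV_const]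
          have hsplit : ∑ r ∈ Finset.range (s+1+1), (Complex.I*b)^r * (h' r p)
              = (∑ r ∈ Finset.range (s+1+1), (Complex.I*b)^r * ((EV m V (h r) p : ℝ) : ℂ))
              + ∑ r ∈ Finset.range (s+1+1), (Complex.I*b)^r * ((q p * hpred r p : ℝ) : ℂ) := by
            rw [← Finset.sum_add_distrib]
            apply Finset.sum_congr rfl
            intro r _
            simp only [h'def, hmRdef, ContinuousLinearMap.mul_apply']
            push_cast
            ring
          have hsum1 : ∑ r ∈ Finset.range (s+1+1), (Complex.I*b)^r * ((EV m V (h r) p : ℝ) : ℂ)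
              = ∑ r ∈ Finset.range (s+1), (Complex.I*b)^r * ((EV m V (h r) p : ℝ) : ℂ) := by
            rw [Finset.sum_range_succ, hEVtop]
            simp
          have hsum2 : ∑ r ∈ Finset.range (s+1+1), (Complex.I*b)^r * ((q p * hpred r p : ℝ) : ℂ)
              = ∑ r ∈ Finset.range (s+1), (Complex.I*b)^(r+1) * ((q p * h r p : ℝ) : ℂ) := by
            rw [Finset.sum_range_succ']
            simp [hpreddef]
          rw [hsplit, hsum1, hsum2]
          have hfact : ∑ r ∈ Finset.range (s+1), (Complex.I*b)^(r+1) * ((q p * h r p : ℝ) : ℂ)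
              = (Complex.I * b * (((Ba m a p):ℂ)⁻¹ * ((EV m V (Ba m a) p : ℝ) : ℂ)))
                * ∑ r ∈ Finset.range (s+1), (Complex.I*b)^r * ((h r p : ℝ) : ℂ) := by
            rw [Finset.mul_sum]
            apply Finset.sum_congr rfl
            intro r _
            have hqv : q p = EV m V (Ba m a) p * (Ba m a p)⁻¹ := by
              simp [hqdef, hmRdef, ContinuousLinearMap.mul_apply']
            rw [hqv]
            push_cast
            ring
          rw [hfact]
          ring
end MainInduction

/-- for each integer `s ≥ 0` and `R > 0` there is `C = C(s,R) > 0`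
with `|E_{V₁} ⋯ E_{V_s} (B_t^{ib})| ≤ C · B_t^{-s/4} · (1+|b|)^s` for all `t ≥ 0`,
all `b ∈ ℝ`, all unit vectors `V₁, …, V_s ∈ ℍ^m`, and all `(X,Z) ∈ ℍ^m × Im(ℍ)`
with `‖X‖ ≤ R`, `|Z| ≤ R`. -/
theorem stmt_14 (m : ℕ) (hm : 1 ≤ m) (R : ℝ) (hR : 0 < R) (s : ℕ) :
    ∃ C : ℝ, 0 < C ∧ ∀ t : ℝ, 0 ≤ t → ∀ b : ℝ,
      ∀ V : Fin s → Fin m → Quaternion ℝ,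
      (∀ i, ∑ k, Quaternion.normSq (V i k) = 1) →
      ∀ X : Fin m → Quaternion ℝ, ∀ Z : Quaternion ℝ, Z.re = 0 →
        Real.sqrt (∑ k, Quaternion.normSq (X k)) ≤ R →
        Real.sqrt (Quaternion.normSq Z) ≤ R →
        ‖EIter m (List.ofFn V) (ftb m t b) (X, Z)‖
          ≤ C * BtF m t (X, Z) ^ (-(s : ℝ) / 4) * (1 + |b|) ^ s := by
  obtain ⟨C, hC, H⟩ := main_induction m s 0
  refine ⟨((s:ℝ)+1) * C + 1, by positivity, ?_⟩
  intro t ht b V hVunit X Z hZre hXR hZR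
  set a := Real.exp (-2*t) with hadef
  have ha : 0 < a := Real.exp_pos _
  have hL : (List.ofFn V).length = s := by simp
  have hUL : UL m (List.ofFn V) := by
    intro W hW
    rw [List.mem_ofFn] at hW
    obtain ⟨i, rfl⟩ := hW
    exact hVunit i
  obtain ⟨h, hsm, hzero, hbnd, hid⟩ := H (List.ofFn V) hL hUL a ha
  have hftb : ftb m t b = fun p => Complex.exp (Complex.I * b * Real.log (Ba m a p)) := rfl
  rw [hftb, hid b]
  beta_reduce
  set p : P m := (X, Z) with hpdef
  have hBtF : BtF m t (X, Z) = Ba m a p := rfl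
  have hBpos : 0 < Ba m a p := Ba_pos ha p
  -- |exp(i b log B)| = 1
  have habs1 : ‖Complex.exp (Complex.I * b * Real.log (Ba m a p))‖ = 1 := by
    rw [Complex.norm_exp]
    have hre : (Complex.I * b * (Real.log (Ba m a p) : ℂ)).re = 0 := by
      simp [Complex.mul_re]
    rw [hre, Real.exp_zero]
  rw [norm_mul, habs1, one_mul]
  have hterm : ∀ r, r ∈ Finset.range (s+1) →
      ‖(Complex.I*(b:ℂ))^r * ((h r p : ℝ) : ℂ)‖ ≤ (1+|b|)^s * (C * Ba m a p ^ (-(s:ℝ)/4)) := by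
    intro r hr
    rw [norm_mul, norm_pow, norm_mul, Complex.norm_I, one_mul, Complex.norm_real,
      Real.norm_eq_abs]
    have h1 : |b|^r ≤ (1+|b|)^s := by
      calc |b|^r ≤ (1+|b|)^r := pow_le_pow_left₀ (abs_nonneg b) (by linarith [abs_nonneg b]) r
        _ ≤ (1+|b|)^s := pow_le_pow_right₀ (by linarith [abs_nonneg b])
            (Nat.lt_succ_iff.mp (Finset.mem_range.mp hr))
    have h2 : ‖((h r p : ℝ) : ℂ)‖ ≤ C * Ba m a p ^ (-(s:ℝ)/4) := by
      rw [Complex.norm_real]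
      have h3 := hbnd r [] UL_nil (le_refl 0) p
      have he : ((-(s:ℝ)) - ((([]:List (Fin m → Quaternion ℝ)).length:ℕ):ℝ))/4
          = -(s:ℝ)/4 := by
        simp
      rw [he] at h3
      exact h3
    exact mul_le_mul h1 h2 (norm_nonneg _) (by positivity)
  calc ‖∑ r ∈ Finset.range (s+1), (Complex.I*(b:ℂ))^r * ((h r p : ℝ) : ℂ)‖
      ≤ ∑ r ∈ Finset.range (s+1), ‖(Complex.I*(b:ℂ))^r * ((h r p : ℝ) : ℂ)‖ :=
        norm_sum_le _ _
    _ ≤ ∑ r ∈ Finset.range (s+1), (1+|b|)^s * (C * Ba m a p ^ (-(s:ℝ)/4)) :=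
        Finset.sum_le_sum hterm
    _ = ((s:ℝ)+1) * ((1+|b|)^s * (C * Ba m a p ^ (-(s:ℝ)/4))) := by
        rw [Finset.sum_const, Finset.card_range]
        push_cast
        ring
    _ ≤ (((s:ℝ)+1) * C + 1) * BtF m t (X, Z) ^ (-(s:ℝ)/4) * (1+|b|)^s := by
        rw [hBtF]
        have hpow : 0 ≤ Ba m a p ^ (-(s:ℝ)/4) := Real.rpow_nonneg hBpos.le _
        have hbb : 0 ≤ (1+|b|)^s := by positivity
        nlinarith [mul_nonneg hbb hpow]
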